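/- Let A be an n×m matrix with entries in {0,...,p-1} and let X be a row transposition. If r(XA) > r(A) lexicographically, then c(XA) > c(A) lexicographically. -/

import Mathlib

def rowCode (p n m : ℕ) (A : Fin n → Fin m → Fin p) : Fin n → ℕ :=
  fun i => ∑ j : Fin m, (A i j : ℕ) * p ^ (m - 1 - (j : ℕ))

def colCode (p n m : ℕ) (A : Fin n → Fin m → Fin p) : Fin m → ℕ :=
  fun j => ∑ i : Fin n, (A i j : ℕ) * p ^ (n - 1 - (i : ℕ))

def MatEquiv (p n m : ℕ) (A B : Fin n → Fin m → Fin p) : Prop :=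
  ∃ (σ : Equiv.Perm (Fin n)) (τ : Equiv.Perm (Fin m)), ∀ i j, A i j = B (σ i) (τ j)

def Canonical (p n m : ℕ) (A : Fin n → Fin m → Fin p) : Prop :=
  ∀ B : Fin n → Fin m → Fin p, MatEquiv p n m B A →
    toLex (rowCode p n m A) ≤ toLex (rowCode p n m B)

def SemiCanonical (p n m : ℕ) (A : Fin n → Fin m → Fin p) : Prop :=
  Monotone (rowCode p n m A) ∧ Monotone (colCode p n m A)


private lemma geomaux (p : ℕ) (hp : 1 ≤ p) : ∀ N, (∑ t ∈ Finset.range N, (p-1) * p^t) + 1 = p^N := by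
  intro N
  induction N with
  | zero => simp
  | succ n ih =>
    rw [Finset.sum_range_succ, pow_succ]
    have ha : 1 ≤ p ^ n := Nat.one_le_pow _ _ hp
    obtain ⟨q, rfl⟩ : ∃ q, p = q + 1 := ⟨p - 1, by omega⟩
    simp only [Nat.add_sub_cancel] at *
    nlinarith [ih]

private lemma tail_lt (p m : ℕ) (hp : 2 ≤ p) (x : Fin m → Fin p) (j : Fin m) :
    ∑ k ∈ Finset.univ.filter (fun k => j < k), (x k : ℕ) * p ^ (m - 1 - (k:ℕ))
      < p ^ (m - 1 - (j:ℕ)) := by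
  have h1 : ∑ k ∈ Finset.univ.filter (fun k => j < k), (x k : ℕ) * p ^ (m - 1 - (k:ℕ))
      ≤ ∑ k ∈ Finset.univ.filter (fun k => j < k), (p - 1) * p ^ (m - 1 - (k:ℕ)) := by
    apply Finset.sum_le_sum
    intro k _
    exact Nat.mul_le_mul_right _ (by have := (x k).isLt; omega)
  have h2 : ∑ k ∈ Finset.univ.filter (fun k => j < k), (p - 1) * p ^ (m - 1 - (k:ℕ))
      = ∑ t ∈ Finset.range (m - 1 - (j:ℕ)), (p - 1) * p ^ t := by
    refine Finset.sum_nbij' (fun k : Fin m => m - 1 - (k:ℕ))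
      (fun t => (⟨m - 1 - t, by have := j.isLt; omega⟩ : Fin m)) ?_ ?_ ?_ ?_ ?_
    · intro k hk
      simp only [Finset.mem_filter, Finset.mem_univ, true_and, Fin.lt_def] at hk
      have := k.isLt
      simp only [Finset.mem_range]
      omega
    · intro t ht
      simp only [Finset.mem_range] at ht
      simp only [Finset.mem_filter, Finset.mem_univ, true_and, Fin.lt_def]
      have := j.isLt
      omega
    · intro k hk
      simp only [Finset.mem_filter, Finset.mem_univ, true_and, Fin.lt_def] at hk
      have := k.isLt
      exact Fin.ext (by simp; omega)
    · intro t ht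
      simp only [Finset.mem_range] at ht
      have := j.isLt
      simp; omega
    · intro k hk
      simp only [Finset.mem_filter, Finset.mem_univ, true_and, Fin.lt_def] at hk
      have := k.isLt
      congr 2
  have h3 := geomaux p (by omega) (m - 1 - (j:ℕ))
  omega

private lemma val_lt (p m : ℕ) (hp : 2 ≤ p) (x y : Fin m → Fin p) (j : Fin m)
    (hpre : ∀ k, k < j → x k = y k) (hj : x j < y j) :
    ∑ k : Fin m, (x k : ℕ) * p ^ (m - 1 - (k:ℕ)) < ∑ k : Fin m, (y k : ℕ) * p ^ (m - 1 - (k:ℕ)) := by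
  have split : ∀ z : Fin m → Fin p,
      ∑ k : Fin m, (z k : ℕ) * p ^ (m - 1 - (k:ℕ))
        = (∑ k ∈ Finset.univ.filter (fun k => k < j), (z k : ℕ) * p ^ (m - 1 - (k:ℕ)))
          + ((z j : ℕ) * p ^ (m - 1 - (j:ℕ))
          + ∑ k ∈ Finset.univ.filter (fun k => j < k), (z k : ℕ) * p ^ (m - 1 - (k:ℕ))) := by
    intro z
    rw [← Finset.sum_filter_add_sum_filter_not (Finset.univ) (fun k => k < j)]
    congr 1
    have hj' : j ∈ Finset.univ.filter (fun k => ¬ k < j) := by simp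
    have hset : (Finset.univ.filter (fun k => ¬ k < j)).erase j
        = Finset.univ.filter (fun k => j < k) := by
      ext k
      simp only [Finset.mem_erase, Finset.mem_filter, Finset.mem_univ, true_and]
      constructor
      · rintro ⟨h1, h2⟩; exact lt_of_le_of_ne (not_lt.mp h2) (Ne.symm h1)
      · intro h1; exact ⟨ne_of_gt h1, not_lt.mpr (le_of_lt h1)⟩
    rw [← Finset.add_sum_erase _ _ hj', hset]
  rw [split x, split y]
  have hL : ∑ k ∈ Finset.univ.filter (fun k => k < j), (x k : ℕ) * p ^ (m - 1 - (k:ℕ))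
      = ∑ k ∈ Finset.univ.filter (fun k => k < j), (y k : ℕ) * p ^ (m - 1 - (k:ℕ)) := by
    apply Finset.sum_congr rfl
    intro k hk
    simp only [Finset.mem_filter, Finset.mem_univ, true_and] at hk
    rw [hpre k hk]
  rw [hL]
  have htx := tail_lt p m hp x j
  have hmul : ((x j : ℕ) + 1) * p ^ (m - 1 - (j:ℕ)) ≤ (y j : ℕ) * p ^ (m - 1 - (j:ℕ)) :=
    Nat.mul_le_mul_right _ hj
  rw [add_mul, one_mul] at hmul
  omega

private lemma key (p n m : ℕ) (hp : 2 ≤ p) (A : Fin n → Fin m → Fin p)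
    (u v : Fin n) (huv : u < v)
    (h : toLex (rowCode p n m A) < toLex (rowCode p n m (fun i j => A (Equiv.swap u v i) j))) :
    toLex (colCode p n m A) < toLex (colCode p n m (fun i j => A (Equiv.swap u v i) j)) := by
  have hrow : ∀ i, rowCode p n m (fun i j => A (Equiv.swap u v i) j) i
      = rowCode p n m A (Equiv.swap u v i) := fun i => rfl
  -- extract first-difference index of row codes
  obtain ⟨i, hpre, hlt⟩ := h
  replace hlt : rowCode p n m A i < rowCode p n m A (Equiv.swap u v i) := hlt
  replace hpre : ∀ k, k < i → rowCode p n m A k = rowCode p n m A (Equiv.swap u v k) := hpre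
  -- show i = u
  have hiu : i = u := by
    by_contra hne
    rcases eq_or_ne i v with rfl | hnv
    · have := hpre u huv
      rw [Equiv.swap_apply_left] at this
      rw [Equiv.swap_apply_right] at hlt
      omega
    · rw [Equiv.swap_apply_of_ne_of_ne hne hnv] at hlt
      omega
  subst i
  rw [Equiv.swap_apply_left] at hlt
  -- hlt : rowCode A u < rowCode A v; get first differing column
  have hne : (Finset.univ.filter (fun k => A u k ≠ A v k)).Nonempty := by
    by_contra hc
    rw [Finset.not_nonempty_iff_eq_empty, Finset.filter_eq_empty_iff] at hc
    have : rowCode p n m A u = rowCode p n m A v := by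
      unfold rowCode
      exact Finset.sum_congr rfl (fun k _ => by
        rw [not_ne_iff.mp (hc (Finset.mem_univ k))])
    omega
  set j := (Finset.univ.filter (fun k => A u k ≠ A v k)).min' hne with hjdef
  have hjne : A u j ≠ A v j :=
    (Finset.mem_filter.mp (Finset.min'_mem _ hne)).2
  have hj : ∀ k, k < j → A u k = A v k := by
    intro k hk
    by_contra hne'
    exact absurd (Finset.min'_le _ k (Finset.mem_filter.mpr ⟨Finset.mem_univ k, hne'⟩))
      (not_le.mpr hk)
  have hjlt : A u j < A v j := by
    rcases lt_or_gt_of_ne hjne with h1 | h1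
    · exact h1
    · exfalso
      have := val_lt p m hp (fun k => A v k) (fun k => A u k) j
        (fun k hk => (hj k hk).symm) h1
      unfold rowCode at hlt
      omega
  -- now prove column lex
  refine ⟨j, ?_, ?_⟩
  · -- earlier columns: entries at u,v equal, so columns of XA equal columns of A
    intro j' hj'
    have heq : A u j' = A v j' := hj j' hj'
    show colCode p n m A j' = colCode p n m (fun i j => A (Equiv.swap u v i) j) j'
    unfold colCode
    apply Finset.sum_congr rfl
    intro i _
    congr 2
    show A i j' = A (Equiv.swap u v i) j'
    rcases eq_or_ne i u with rfl | h1
    · rw [Equiv.swap_apply_left]; exact heq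
    rcases eq_or_ne i v with rfl | h2
    · rw [Equiv.swap_apply_right]; exact heq.symm
    · rw [Equiv.swap_apply_of_ne_of_ne h1 h2]
  · -- strict at column j
    show colCode p n m A j < colCode p n m (fun i j => A (Equiv.swap u v i) j) j
    unfold colCode
    have hvmem : v ∈ (Finset.univ : Finset (Fin n)).erase u :=
      Finset.mem_erase.mpr ⟨(ne_of_lt huv).symm, Finset.mem_univ v⟩
    have splitg : ∀ g : Fin n → ℕ, ∑ i : Fin n, g i
        = g u + (g v + ∑ i ∈ (Finset.univ.erase u).erase v, g i) := by
      intro g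
      rw [Finset.add_sum_erase _ _ hvmem, Finset.add_sum_erase _ _ (Finset.mem_univ u)]
    rw [splitg, splitg]
    have hrest : ∑ i ∈ ((Finset.univ : Finset (Fin n)).erase u).erase v,
          ((A (Equiv.swap u v i) j : ℕ)) * p ^ (n - 1 - (i:ℕ))
        = ∑ i ∈ ((Finset.univ : Finset (Fin n)).erase u).erase v,
          ((A i j : ℕ)) * p ^ (n - 1 - (i:ℕ)) := by
      apply Finset.sum_congr rfl
      intro i hi
      simp only [Finset.mem_erase] at hi
      rw [Equiv.swap_apply_of_ne_of_ne hi.2.1 hi.1]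
    simp only [Equiv.swap_apply_left, Equiv.swap_apply_right]
    rw [hrest]
    have hQP : p ^ (n - 1 - (v:ℕ)) < p ^ (n - 1 - (u:ℕ)) := by
      apply Nat.pow_lt_pow_right (by omega)
      have h1 : (u:ℕ) < (v:ℕ) := huv
      have h2 := v.isLt
      omega
    obtain ⟨d, hd⟩ : ∃ d, (A v j : ℕ) = (A u j : ℕ) + d + 1 :=
      ⟨(A v j : ℕ) - (A u j : ℕ) - 1, by omega⟩
    rw [hd]
    set P := p ^ (n - 1 - (u:ℕ))
    set Q := p ^ (n - 1 - (v:ℕ))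
    have hdd : d * Q ≤ d * P := Nat.mul_le_mul_left d (le_of_lt hQP)
    have e1 : ((A u j : ℕ) + d + 1) * P = (A u j : ℕ) * P + d * P + P := by ring
    have e2 : ((A u j : ℕ) + d + 1) * Q = (A u j : ℕ) * Q + d * Q + Q := by ring
    rw [e1, e2]
    omega

/-- dual theorem: if swapping two rows strictly increases `r`
lexicographically, then it strictly increases `c` lexicographically. -/
theorem stmt7 (p n m : ℕ) (hp : 2 ≤ p) (A : Fin n → Fin m → Fin p)
    (u v : Fin n) (huv : u ≠ v)
    (XA : Fin n → Fin m → Fin p) (hXA : XA = fun i j => A (Equiv.swap u v i) j)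
    (h : toLex (rowCode p n m A) < toLex (rowCode p n m XA)) :
    toLex (colCode p n m A) < toLex (colCode p n m XA) := by
  subst hXA
  rcases lt_or_gt_of_ne huv with h1 | h1
  · exact key p n m hp A u v h1 h
  · rw [show Equiv.swap u v = Equiv.swap v u from Equiv.swap_comm u v] at h ⊢
    exact key p n m hp A v u h1 h
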